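/- Let (α_i) be a sequence of positive reals such that for every subset I of ℕ with ∑_{i∈I} α_i < ∞ we have inf{α_i : i ∉ I} = 0. Then for every subset I ⊆ ℕ and every real t with ∑_{i∈I} α_i < t < ∞, there exists J ⊇ I with ∑_{i∈J} α_i = t. -/

import Mathlib

open scoped ENNReal

theorem stmt0 (α : ℕ → ℝ) (hα : ∀ i, 0 < α i)
    (h : ∀ I : Set ℕ, (∑' i : I, ENNReal.ofReal (α (i : ℕ))) < ⊤ →
      (⨅ i : ↥Iᶜ, ENNReal.ofReal (α (i : ℕ))) = 0) :
    ∀ (I : Set ℕ) (t : ℝ≥0∞), (∑' i : I, ENNReal.ofReal (α (i : ℕ))) < t → t < ⊤ →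
      ∃ J : Set ℕ, I ⊆ J ∧ (∑' i : J, ENNReal.ofReal (α (i : ℕ))) = t := by
  classical
  intro I t hIt htop
  set f : ℕ → ℝ≥0∞ := fun i => ENNReal.ofReal (α i) with hf
  have hmono : ∀ {A B : Set ℕ}, A ⊆ B → (∑' i : A, f i) ≤ ∑' i : B, f i := by
    intro A B hAB
    rw [tsum_subtype, tsum_subtype]
    exact ENNReal.tsum_le_tsum fun i =>
      Set.indicator_le_indicator_of_subset hAB (fun _ => zero_le) i
  set S : Set (Set ℕ) := {J | I ⊆ J ∧ (∑' i : J, f i) ≤ t} with hS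
  have hIS : I ∈ S := ⟨subset_rfl, hIt.le⟩
  have hchain : ∀ c ⊆ S, IsChain (· ⊆ ·) c → c.Nonempty →
      ∃ ub ∈ S, ∀ s ∈ c, s ⊆ ub := by
    intro c hcS hc hcne
    refine ⟨⋃₀ c, ⟨?_, ?_⟩, fun s hs => Set.subset_sUnion_of_mem hs⟩
    · obtain ⟨J0, hJ0⟩ := hcne
      exact (hcS hJ0).1.trans (Set.subset_sUnion_of_mem hJ0)
    · -- every finite subset of ⋃₀ c lies in a member of the chain
      have key : ∀ F : Finset ℕ, ↑F ⊆ ⋃₀ c → ∃ J ∈ c, ↑F ⊆ J := by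
        intro F
        induction F using Finset.induction_on with
        | empty => intro _; obtain ⟨J0, hJ0⟩ := hcne; exact ⟨J0, hJ0, by simp⟩
        | @insert a F' ha ih =>
          intro hsub
          have hsub' : (insert a (↑F' : Set ℕ)) ⊆ ⋃₀ c := by simpa using hsub
          obtain ⟨J1, hJ1, hFJ1⟩ := ih ((Set.subset_insert a ↑F').trans hsub')
          obtain ⟨J2, hJ2c, haJ2⟩ := hsub' (Set.mem_insert a _)
          rcases eq_or_ne J1 J2 with rfl | hne
          · exact ⟨J1, hJ1, by simpa using Set.insert_subset haJ2 hFJ1⟩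
          · rcases hc hJ1 hJ2c hne with h12 | h21
            · exact ⟨J2, hJ2c, by
                simpa using Set.insert_subset haJ2 (hFJ1.trans h12)⟩
            · exact ⟨J1, hJ1, by
                simpa using Set.insert_subset (h21 haJ2) hFJ1⟩
      rw [tsum_subtype, ENNReal.tsum_eq_iSup_sum]
      refine iSup_le fun F => ?_
      have hFsub : ↑(F.filter (· ∈ ⋃₀ c)) ⊆ ⋃₀ c := by
        intro x hx
        simp only [Finset.coe_filter, Set.mem_setOf_eq] at hx
        exact hx.2
      obtain ⟨J, hJc, hFJ⟩ := key _ hFsub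
      have h1 : ∑ i ∈ F, (⋃₀ c).indicator f i
          = ∑ i ∈ F.filter (· ∈ ⋃₀ c), f i := by
        rw [Finset.sum_filter]
        refine Finset.sum_congr rfl fun i _ => ?_
        by_cases hi : i ∈ ⋃₀ c <;> simp [Set.indicator, hi]
      have h2 : ∑ i ∈ F.filter (· ∈ ⋃₀ c), f i ≤ ∑' i : J, f i := by
        have := hmono hFJ
        calc ∑ i ∈ F.filter (· ∈ ⋃₀ c), f i
            = ∑' i : (↑(F.filter (· ∈ ⋃₀ c)) : Set ℕ), f i :=
              (Finset.tsum_subtype _ f).symm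
          _ ≤ ∑' i : J, f i := this
      exact h1.le.trans (h2.trans (hcS hJc).2)
  obtain ⟨J, hIJ, hJmax⟩ := zorn_subset_nonempty S hchain I hIS
  refine ⟨J, hIJ, ?_⟩
  rcases lt_or_eq_of_le hJmax.1.2 with hlt | heq
  · exfalso
    have hfin : (∑' i : J, f i) < ⊤ := hlt.trans htop
    have hinf := h J hfin
    have hpos : (0 : ℝ≥0∞) < t - ∑' i : J, f i := by
      exact tsub_pos_of_lt hlt
    have : (⨅ i : ↥Jᶜ, f i) < t - ∑' i : J, f i := hinf ▸ hpos
    obtain ⟨⟨i, hiJc⟩, hi⟩ := iInf_lt_iff.mp this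
    have hiJ : i ∉ J := hiJc
    have hsum : (∑' j : (insert i J : Set ℕ), f j) = f i + ∑' j : J, f j := by
      rw [Set.insert_eq]
      rw [Summable.tsum_union_disjoint (Set.disjoint_singleton_left.mpr hiJ)
        ENNReal.summable ENNReal.summable, tsum_singleton]
    have hlt2 : f i + (∑' j : J, f j) < t := by
      have h3 : f i + ∑' j : J, f j < (t - ∑' j : J, f j) + ∑' j : J, f j :=
        ENNReal.add_lt_add_right hfin.ne hi
      rwa [tsub_add_cancel_of_le hlt.le] at h3
    have hle : (∑' j : (insert i J : Set ℕ), f j) ≤ t := by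
      rw [hsum]; exact hlt2.le
    have hmem : insert i J ∈ S := ⟨hIJ.trans (Set.subset_insert _ _), hle⟩
    have := hJmax.2 hmem (Set.subset_insert _ _)
    exact hiJ (this (Set.mem_insert _ _))
  · exact heq
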